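/- arXiv:2102.08031 — 2 statements merged into one kernel-verified Lean document; each statement's English description precedes it below -/
import Mathlib

section
/- Let n ∈ ℕ, a ∈ ℝ, b ∈ [0,∞)^n and let μ be a positive Borel measure on ℝ^n satisfying the growth condition and the Nevanlinna condition, and let h(z) := a + Σ_{ℓ=1}^n b_ℓ z_ℓ + π^{−n} ∫_{ℝ^n} K_n(z,t) dμ(t) for z ∈ ℂ^{+n}. Then for every index j ∈ {1,…,n}, every angle θ ∈ (0, π/2], and every fixed choice of the components z_k ∈ ℂ^+ for k ≠ j, one has h(z)/z_j → b_j as |z_j| → ∞ within the upper Stoltz domain of angle θ; in particular this limit is independent of the entries of z at the non-j-th positions. -/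
open Complex MeasureTheory Finset Filter Topology

/-- The kernel `K_n`. -/
noncomputable def kernelK (n : ℕ) (z : Fin n → ℂ) (t : Fin n → ℝ) : ℂ :=
  Complex.I * ((2 / (2 * Complex.I) ^ n) *
      ∏ ℓ : Fin n, (((t ℓ : ℂ) - z ℓ)⁻¹ - ((t ℓ : ℂ) + Complex.I)⁻¹) -
    (1 / (2 * Complex.I) ^ n) *
      ∏ ℓ : Fin n, (((t ℓ : ℂ) - Complex.I)⁻¹ - ((t ℓ : ℂ) + Complex.I)⁻¹))

/-- The selective conjugation map `Ψ_B`. -/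
noncomputable def PsiMap (n : ℕ) (B : Finset (Fin n)) (z w : Fin n → ℂ) : Fin n → ℂ :=
  fun j => if j ∈ B then (starRingEnd ℂ) (w j) else z j

/-- The poly cut-plane `(ℂ∖ℝ)^n`. -/
def polyCutPlane (n : ℕ) : Set (Fin n → ℂ) := {z | ∀ j, (z j).im ≠ 0}

/-- The poly upper half-plane `ℂ^{+n}`. -/
def upperPoly (n : ℕ) : Set (Fin n → ℂ) := {z | ∀ j, 0 < (z j).im}

/-- The growth condition for a positive Borel measure on `ℝ^n`. -/
def GrowthCondition (n : ℕ) (μ : Measure (Fin n → ℝ)) : Prop :=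
  ∫⁻ t, ENNReal.ofReal (∏ ℓ : Fin n, (1 + (t ℓ) ^ 2)⁻¹) ∂μ < ⊤

/-- The factors `N_{-1}, N_0, N_1`. -/
noncomputable def Nfun (ρ : ℤ) (z : ℂ) (t : ℝ) : ℂ :=
  if ρ = -1 then (1 / (2 * Complex.I)) * (((t : ℂ) - z)⁻¹ - ((t : ℂ) - Complex.I)⁻¹)
  else if ρ = 0 then
    (1 / (2 * Complex.I)) * (((t : ℂ) - Complex.I)⁻¹ - ((t : ℂ) + Complex.I)⁻¹)
  else (1 / (2 * Complex.I)) * (((t : ℂ) + Complex.I)⁻¹ - ((t : ℂ) - (starRingEnd ℂ) z)⁻¹)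

/-- The Nevanlinna condition for a positive Borel measure on `ℝ^n`: the sum runs over all
`ρ ∈ {-1,0,1}^n` containing both `-1` and `1` (encoded via `Fin 3`, `k ↦ k - 1`). -/
def NevanlinnaCondition (n : ℕ) (μ : Measure (Fin n → ℝ)) : Prop :=
  ∀ z : Fin n → ℂ, (∀ j, 0 < (z j).im) →
    ∑ ρ ∈ Finset.univ.filter
        (fun ρ : Fin n → Fin 3 => (∃ j, ρ j = 0) ∧ (∃ j, ρ j = 2)),
      ∫ t, ∏ j : Fin n, Nfun ((ρ j : ℤ) - 1) (z j) (t j) ∂μ = 0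

/-- The symmetry formula for a function on the poly cut-plane. -/
def SymmetryFormula (n : ℕ) (f : (Fin n → ℂ) → ℂ) : Prop :=
  ∀ z ∈ polyCutPlane n,
    f z = ∑ B ∈ Finset.univ.powerset.filter (fun B : Finset (Fin n) => B ≠ ∅),
      (-1 : ℂ) ^ (B.card + 1) *
        (starRingEnd ℂ) (f (PsiMap n B (fun _ => Complex.I) z))

/-- The variable non-dependence property. -/
def VarNonDep (n : ℕ) (f : (Fin n → ℂ) → ℂ) : Prop :=
  ∀ z ∈ polyCutPlane n, ∀ w ∈ polyCutPlane n,
    (∃ j, (z j).im < 0) → (∀ j, (z j).im < 0 ↔ (w j).im < 0) →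
    (∀ j, (z j).im < 0 → z j = w j) → f z = f w

/-- The upper Stoltz domain with centre `0` and angle `θ`. -/
def upperStoltz (θ : ℝ) : Set ℂ :=
  {w | 0 < w.im ∧ θ ≤ Complex.arg w ∧ Complex.arg w ≤ Real.pi - θ}

/-- The lower Stoltz domain with centre `0` and angle `θ`. -/
def lowerStoltz (θ : ℝ) : Set ℂ :=
  {w | (starRingEnd ℂ) w ∈ upperStoltz θ}

/-- The filter of `|w| → ∞` within a set `S ⊆ ℂ`. -/
noncomputable def stoltzFilter (S : Set ℂ) : Filter ℂ :=
  (Filter.comap (fun w : ℂ => ‖w‖) Filter.atTop) ⊓ Filter.principal S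

lemma aux_sub_ne_zero {ζ : ℂ} (hζ : ζ.im ≠ 0) (t : ℝ) : (t : ℂ) - ζ ≠ 0 := by
  intro h
  rw [sub_eq_zero] at h
  exact hζ (by simpa using congrArg Complex.im h.symm)

lemma aux_add_I_ne_zero (t : ℝ) : (t : ℂ) + Complex.I ≠ 0 := by
  intro h
  have := congrArg Complex.im h
  simp at this

lemma norm_ofReal_add_I (t : ℝ) : ‖(t : ℂ) + Complex.I‖ = Real.sqrt (1 + t ^ 2) := by
  rw [Complex.norm_def, Complex.normSq_apply]
  simp
  ring_nf

lemma factor_bound {ζ : ℂ} (hζ : ζ.im ≠ 0) (t : ℝ) :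
    ‖((t:ℂ) - ζ)⁻¹ - ((t:ℂ) + Complex.I)⁻¹‖ ≤
      (‖ζ + Complex.I‖ * Real.sqrt ((1 + 2*ζ.re^2)/ζ.im^2 + 2)) * (1 + t^2)⁻¹ := by
  have h1 : (t:ℂ) - ζ ≠ 0 := aux_sub_ne_zero hζ t
  have h2 : (t:ℂ) + Complex.I ≠ 0 := aux_add_I_ne_zero t
  have hrw : ((t:ℂ) - ζ)⁻¹ - ((t:ℂ) + Complex.I)⁻¹
      = (ζ + Complex.I) * (((t:ℂ)-ζ)⁻¹ * ((t:ℂ)+Complex.I)⁻¹) := by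
    field_simp
    ring
  set c : ℝ := (1 + 2*ζ.re^2)/ζ.im^2 + 2 with hc
  have him2 : 0 < ζ.im^2 := by positivity
  have hcpos : 0 < c := by positivity
  have hnorm2 : ‖(t:ℂ) - ζ‖^2 = (t - ζ.re)^2 + ζ.im^2 := by
    rw [Complex.sq_norm, Complex.normSq_apply]
    simp
    ring
  have hkey : 1 + t^2 ≤ c * ‖(t:ℂ) - ζ‖^2 := by
    rw [hnorm2, hc]
    have e : (1 + 2*ζ.re^2)/ζ.im^2 * ζ.im^2 = 1 + 2*ζ.re^2 := by field_simp
    nlinarith [sq_nonneg (t - 2*ζ.re), div_nonneg (by positivity : (0:ℝ) ≤ 1 + 2*ζ.re^2) him2.le,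
      sq_nonneg (t - ζ.re)]
  set u := Real.sqrt (1 + t^2) with hu
  set v := ‖(t:ℂ) - ζ‖ with hv
  have hvpos : 0 < v := by rw [hv]; exact norm_pos_iff.mpr h1
  have hupos : 0 < u := Real.sqrt_pos.mpr (by positivity)
  have huu : u * u = 1 + t^2 := Real.mul_self_sqrt (by positivity)
  have huv : u ≤ Real.sqrt c * v := by
    have := Real.sqrt_le_sqrt hkey
    rwa [Real.sqrt_mul hcpos.le, Real.sqrt_sq (norm_nonneg _)] at this
  rw [hrw, norm_mul, norm_mul, norm_inv, norm_inv, norm_ofReal_add_I, ← hu, ← hv, mul_assoc]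
  apply mul_le_mul_of_nonneg_left _ (norm_nonneg _)
  have e1 : v⁻¹ * u⁻¹ = 1 / (v * u) := by field_simp
  have e2 : Real.sqrt c * (1 + t^2)⁻¹ = Real.sqrt c / (u * u) := by rw [huu]; ring
  rw [e1, e2, div_le_div_iff₀ (by positivity) (by positivity)]
  nlinarith [Real.sqrt_nonneg c]

lemma const_factor_bound (t : ℝ) :
    ‖((t:ℂ) - Complex.I)⁻¹ - ((t:ℂ) + Complex.I)⁻¹‖ ≤ (2 * Real.sqrt 3) * (1 + t^2)⁻¹ := by
  have h := factor_bound (ζ := Complex.I) (by simp) t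
  have e1 : ‖Complex.I + Complex.I‖ = 2 := by
    rw [show Complex.I + Complex.I = 2 * Complex.I by ring, norm_mul]
    simp
  rw [Complex.I_re, Complex.I_im] at h
  norm_num at h
  rw [e1] at h
  linarith

lemma stoltz_im {θ : ℝ} (hθ1 : 0 < θ) (hθ2 : θ ≤ Real.pi / 2) {w : ℂ}
    (hw : w ∈ upperStoltz θ) : Real.sin θ * ‖w‖ ≤ w.im := by
  have hsin : Real.sin θ ≤ Real.sin (Complex.arg w) := by
    rcases le_or_gt (Complex.arg w) (Real.pi / 2) with hle | hlt
    · exact Real.sin_le_sin_of_le_of_le_pi_div_two (by linarith [Real.pi_pos]) hle hw.2.1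
    · have h := Real.sin_le_sin_of_le_of_le_pi_div_two
        (show -(Real.pi/2) ≤ θ by linarith [Real.pi_pos])
        (show Real.pi - Complex.arg w ≤ Real.pi/2 by linarith)
        (show θ ≤ Real.pi - Complex.arg w by linarith [hw.2.2])
      rwa [Real.sin_pi_sub] at h
  calc Real.sin θ * ‖w‖ ≤ Real.sin (Complex.arg w) * ‖w‖ :=
        mul_le_mul_of_nonneg_right hsin (norm_nonneg w)
    _ = w.im := by rw [mul_comm]; exact Complex.norm_mul_sin_arg w

lemma stoltz_factor_bound {θ : ℝ} (hθ1 : 0 < θ) (hθ2 : θ ≤ Real.pi / 2) {w : ℂ}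
    (hw : w ∈ upperStoltz θ) (hw1 : 1 ≤ ‖w‖) (t : ℝ) :
    ‖(((t:ℂ) - w)⁻¹ - ((t:ℂ) + Complex.I)⁻¹) / w‖ ≤ (6 / Real.sin θ) * (1 + t^2)⁻¹ := by
  set s := Real.sin θ with hsdef
  have hs0 : 0 < s := Real.sin_pos_of_pos_of_lt_pi hθ1 (by linarith [Real.pi_pos])
  have hs1 : s ≤ 1 := Real.sin_le_one θ
  have him : s * ‖w‖ ≤ w.im := stoltz_im hθ1 hθ2 hw
  have hwim : 0 < w.im := hw.1
  have hw0 : w ≠ 0 := by intro h; rw [h] at hwim; simp at hwim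
  have habs2 : (‖w‖)^2 = w.re^2 + w.im^2 := by
    rw [Complex.sq_norm, Complex.normSq_apply]; ring
  have h1 : s^2 * (w.re^2 + w.im^2) ≤ w.im^2 := by
    have h := mul_self_le_mul_self (by positivity) him
    nlinarith [habs2]
  have h2 : (1:ℝ) ≤ w.re^2 + w.im^2 := by
    nlinarith [norm_nonneg w, habs2]
  have hnorm2 : ‖(t:ℂ) - w‖^2 = (t - w.re)^2 + w.im^2 := by
    rw [Complex.sq_norm, Complex.normSq_apply]
    simp
    ring
  have hkey : s^2/9 * (1 + t^2) ≤ ‖(t:ℂ) - w‖^2 := by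
    rw [hnorm2]
    nlinarith [sq_nonneg (s*(t - 2*w.re)), sq_nonneg (t - w.re),
      mul_nonneg (by nlinarith : (0:ℝ) ≤ 1 - s^2) (sq_nonneg (t - w.re))]
  set u := Real.sqrt (1 + t^2) with hu
  set v := ‖(t:ℂ) - w‖ with hv
  have h1' : (t:ℂ) - w ≠ 0 := by
    intro h; rw [sub_eq_zero] at h
    have h' : w.im = 0 := by simpa using congrArg Complex.im h.symm
    linarith
  have hvpos : 0 < v := norm_pos_iff.mpr h1'
  have hupos : 0 < u := Real.sqrt_pos.mpr (by positivity)
  have huu : u * u = 1 + t^2 := Real.mul_self_sqrt (by positivity)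
  have huv : s/3 * u ≤ v := by
    have h := Real.sqrt_le_sqrt hkey
    rwa [Real.sqrt_mul (by positivity), Real.sqrt_sq (norm_nonneg _),
      show Real.sqrt (s^2/9) = s/3 by
        rw [show s^2/9 = (s/3)^2 by ring, Real.sqrt_sq (by positivity)]] at h
  have hrw : (((t:ℂ) - w)⁻¹ - ((t:ℂ) + Complex.I)⁻¹) / w
      = (w + Complex.I) * (((t:ℂ)-w)⁻¹ * (((t:ℂ)+Complex.I)⁻¹ * w⁻¹)) := by
    have h2' : (t:ℂ) + Complex.I ≠ 0 := aux_add_I_ne_zero t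
    field_simp
    ring
  have hnti : ‖(t:ℂ) + Complex.I‖ = u := by
    rw [hu, Complex.norm_def, Complex.normSq_apply]
    simp
    ring_nf
  have hW : (0:ℝ) < ‖w‖ := by positivity
  have hwi : ‖w + Complex.I‖ ≤ 2 * ‖w‖ := by
    calc ‖w + Complex.I‖ ≤ ‖w‖ + ‖Complex.I‖ := norm_add_le _ _
      _ = ‖w‖ + 1 := by simp
      _ ≤ 2 * ‖w‖ := by linarith
  rw [hrw, norm_mul, norm_mul, norm_mul, norm_inv, norm_inv, norm_inv, hnti, ← hv]
  calc ‖w + Complex.I‖ * (v⁻¹ * (u⁻¹ * (‖w‖)⁻¹))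
      ≤ (2 * ‖w‖) * (v⁻¹ * (u⁻¹ * (‖w‖)⁻¹)) := by
        apply mul_le_mul_of_nonneg_right hwi (by positivity)
    _ = 2 / (v * u) := by field_simp
    _ ≤ 6 / s * (1 + t^2)⁻¹ := by
        rw [show (6:ℝ)/s * (1+t^2)⁻¹ = 6 / (s * (u*u)) by rw [huu]; field_simp,
          div_le_div_iff₀ (by positivity) (by positivity)]
        nlinarith

lemma kernelK_update (n : ℕ) (z : Fin n → ℂ) (j : Fin n) (w : ℂ) (t : Fin n → ℝ) :
    kernelK n (Function.update z j w) t =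
      Complex.I * ((2 / (2 * Complex.I) ^ n) *
          (((((t j : ℂ) - w)⁻¹ - ((t j : ℂ) + Complex.I)⁻¹)) *
            ∏ ℓ ∈ Finset.univ.erase j, (((t ℓ : ℂ) - z ℓ)⁻¹ - ((t ℓ : ℂ) + Complex.I)⁻¹)) -
        (1 / (2 * Complex.I) ^ n) *
          ∏ ℓ : Fin n, (((t ℓ : ℂ) - Complex.I)⁻¹ - ((t ℓ : ℂ) + Complex.I)⁻¹)) := by
  unfold kernelK
  congr 2
  rw [← Finset.mul_prod_erase Finset.univ _ (Finset.mem_univ j), Function.update_self]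
  have : (∏ x ∈ Finset.univ.erase j,
        (((t x : ℂ) - Function.update z j w x)⁻¹ - ((t x : ℂ) + Complex.I)⁻¹)) =
      ∏ ℓ ∈ Finset.univ.erase j, (((t ℓ : ℂ) - z ℓ)⁻¹ - ((t ℓ : ℂ) + Complex.I)⁻¹) :=
    Finset.prod_congr rfl fun ℓ hℓ => by
      rw [Function.update_of_ne (Finset.ne_of_mem_erase hℓ)]
  rw [this]

lemma kernelK_continuous (n : ℕ) (ζ : Fin n → ℂ) (hζ : ∀ ℓ, (ζ ℓ).im ≠ 0) :
    Continuous (fun t : Fin n → ℝ => kernelK n ζ t) := by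
  unfold kernelK
  have hof : ∀ ℓ : Fin n, Continuous (fun t : Fin n → ℝ => ((t ℓ : ℝ) : ℂ)) := fun ℓ =>
    Complex.continuous_ofReal.comp (continuous_apply ℓ)
  have c1 : ∀ (ℓ : Fin n) (ξ : ℂ), ξ.im ≠ 0 →
      Continuous (fun t : Fin n → ℝ => ((t ℓ : ℂ) - ξ)⁻¹) := fun ℓ ξ hξ =>
    Continuous.inv₀ ((hof ℓ).sub continuous_const) fun t => aux_sub_ne_zero hξ (t ℓ)
  have c2 : ∀ ℓ : Fin n, Continuous (fun t : Fin n → ℝ => ((t ℓ : ℂ) + Complex.I)⁻¹) :=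
    fun ℓ => Continuous.inv₀ ((hof ℓ).add continuous_const) fun t => aux_add_I_ne_zero (t ℓ)
  exact continuous_const.mul
    (((continuous_const.mul (continuous_finset_prod _ fun ℓ _ =>
        (c1 ℓ (ζ ℓ) (hζ ℓ)).sub (c2 ℓ))).sub
      (continuous_const.mul (continuous_finset_prod _ fun ℓ _ =>
        (c1 ℓ Complex.I (by simp)).sub (c2 ℓ)))))

lemma split_id (A B fj P Q w i' : ℂ) :
    i' * (A * (fj * P) - B * Q) / w = (i' * A) * ((fj / w) * P) - (i' * B * Q) * w⁻¹ := by
  rw [div_eq_mul_inv, div_eq_mul_inv]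
  ring
noncomputable def MzConst (ζ : ℂ) : ℝ :=
  ‖ζ + Complex.I‖ * Real.sqrt ((1 + 2*ζ.re^2)/ζ.im^2 + 2)

lemma factor_bound' {ζ : ℂ} (hζ : ζ.im ≠ 0) (t : ℝ) :
    ‖((t:ℂ) - ζ)⁻¹ - ((t:ℂ) + Complex.I)⁻¹‖ ≤ MzConst ζ * (1 + t^2)⁻¹ := by
  unfold MzConst; exact factor_bound hζ t


/-- Formula (2.8): the representing parameter `b_j` of a Herglotz-Nevanlinna function is its
non-tangential growth coefficient along the `j`-th coordinate, independently of the other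
entries of `z`. -/
theorem b_parameter_stoltz_limit
    (n : ℕ) (a : ℝ) (b : Fin n → ℝ) (hb : ∀ j, 0 ≤ b j)
    (μ : Measure (Fin n → ℝ)) (hμg : GrowthCondition n μ) (hμN : NevanlinnaCondition n μ)
    (h : (Fin n → ℂ) → ℂ)
    (hh : ∀ z ∈ upperPoly n,
      h z = (a : ℂ) + (∑ ℓ : Fin n, (b ℓ : ℂ) * z ℓ) +
        (1 / (Real.pi : ℂ) ^ n) * ∫ t, kernelK n z t ∂μ)
    (j : Fin n) (θ : ℝ) (hθ1 : 0 < θ) (hθ2 : θ ≤ Real.pi / 2)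
    (z : Fin n → ℂ) (hz : ∀ k, k ≠ j → 0 < (z k).im) :
    Filter.Tendsto (fun w : ℂ => h (Function.update z j w) / w)
      (stoltzFilter (upperStoltz θ)) (nhds (b j : ℂ)) := by
  classical
  set F := stoltzFilter (upperStoltz θ) with hFdef
  have hs0 : 0 < Real.sin θ := Real.sin_pos_of_pos_of_lt_pi hθ1 (by linarith [Real.pi_pos])
  have hmemS : ∀ᶠ w in F, w ∈ upperStoltz θ :=
    Filter.Eventually.filter_mono inf_le_right (by
      rw [eventually_principal]; exact fun x hx => hx)
  have habs : Tendsto (fun w : ℂ => ‖w‖) F atTop := tendsto_comap.mono_left inf_le_left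
  have hnorm : Tendsto (fun w : ℂ => ‖w‖) F atTop := by
    exact habs
  have hbig : ∀ᶠ w in F, 1 ≤ ‖w‖ := habs.eventually_ge_atTop 1
  have hinv : Tendsto (fun w : ℂ => w⁻¹) F (𝓝 0) := by
    rw [tendsto_zero_iff_norm_tendsto_zero]
    simpa only [norm_inv, Function.comp_def] using tendsto_inv_atTop_zero.comp hnorm
  haveI hcg : F.IsCountablyGenerated := by
    rw [hFdef]; unfold stoltzFilter; infer_instance
  set D : ℝ := (2/2^n) * ((6/Real.sin θ) * ∏ ℓ ∈ Finset.univ.erase j, MzConst (z ℓ)) +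
      (1/2^n) * (2*Real.sqrt 3)^n with hD
  have hMznn : ∀ ℓ : Fin n, 0 ≤ MzConst (z ℓ) := fun ℓ => by unfold MzConst; positivity
  have hprodMz : 0 ≤ ∏ ℓ ∈ Finset.univ.erase j, MzConst (z ℓ) :=
    Finset.prod_nonneg fun ℓ _ => hMznn ℓ
  have hDnn : 0 ≤ D := by
    rw [hD]
    have h6s : (0:ℝ) ≤ 6/Real.sin θ := div_nonneg (by norm_num) hs0.le
    positivity
  have hcA : ‖Complex.I * (2/(2*Complex.I)^n)‖ = 2/2^n := by
    simp [norm_mul, norm_div, norm_pow]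
  have hcB : ‖Complex.I * (1/(2*Complex.I)^n)‖ = 1/2^n := by
    simp [norm_mul, norm_div, norm_pow]
  -- dominated convergence for the kernel integral
  have hK : Tendsto (fun w : ℂ => ∫ t, kernelK n (Function.update z j w) t / w ∂μ) F (𝓝 0) := by
    have h0 : (𝓝 (0:ℂ)) = 𝓝 (∫ (_ : Fin n → ℝ), (0:ℂ) ∂μ) := by rw [integral_zero]
    rw [h0]
    apply tendsto_integral_filter_of_dominated_convergence
      (fun t => D * ∏ ℓ : Fin n, (1 + (t ℓ)^2)⁻¹)
    · -- measurability
      filter_upwards [hmemS] with w hwS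
      have him : ∀ ℓ, (Function.update z j w ℓ).im ≠ 0 := by
        intro ℓ
        rcases eq_or_ne ℓ j with rfl | hne
        · rw [Function.update_self]; exact hwS.1.ne'
        · rw [Function.update_of_ne hne]; exact (hz ℓ hne).ne'
      exact ((kernelK_continuous n _ him).div_const w).aestronglyMeasurable
    · -- bound
      filter_upwards [hmemS, hbig] with w hwS hw1
      apply ae_of_all
      intro t
      rw [kernelK_update, split_id]
      have hw1' : 1 ≤ ‖w‖ := by exact hw1
      have e1 : ‖(Complex.I * (2/(2*Complex.I)^n)) *
          (((((t j : ℂ) - w)⁻¹ - ((t j : ℂ) + Complex.I)⁻¹))/w *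
            ∏ ℓ ∈ Finset.univ.erase j, (((t ℓ : ℂ) - z ℓ)⁻¹ - ((t ℓ : ℂ) + Complex.I)⁻¹))‖
          = (2/2^n) * (‖((((t j : ℂ) - w)⁻¹ - ((t j : ℂ) + Complex.I)⁻¹))/w‖ *
            ‖∏ ℓ ∈ Finset.univ.erase j, (((t ℓ : ℂ) - z ℓ)⁻¹ - ((t ℓ : ℂ) + Complex.I)⁻¹)‖) := by
        rw [norm_mul, hcA, norm_mul]
      have e2 : ‖(Complex.I * (1/(2*Complex.I)^n) *
          ∏ ℓ : Fin n, (((t ℓ : ℂ) - Complex.I)⁻¹ - ((t ℓ : ℂ) + Complex.I)⁻¹)) * w⁻¹‖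
          = ((1/2^n) * ‖∏ ℓ : Fin n, (((t ℓ : ℂ) - Complex.I)⁻¹ - ((t ℓ : ℂ) + Complex.I)⁻¹)‖)
            * ‖w‖⁻¹ := by
        rw [norm_mul, norm_mul, hcB, norm_inv]
      refine le_trans (norm_sub_le _ _) ?_
      rw [e1, e2]
      have hstoltz : ‖((((t j : ℂ) - w)⁻¹ - ((t j : ℂ) + Complex.I)⁻¹))/w‖
          ≤ (6/Real.sin θ) * (1 + (t j)^2)⁻¹ := stoltz_factor_bound hθ1 hθ2 hwS hw1 (t j)
      have hPb : ‖∏ ℓ ∈ Finset.univ.erase j, (((t ℓ : ℂ) - z ℓ)⁻¹ - ((t ℓ : ℂ) + Complex.I)⁻¹)‖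
          ≤ ∏ ℓ ∈ Finset.univ.erase j, (MzConst (z ℓ) * (1 + (t ℓ)^2)⁻¹) := by
        rw [norm_prod]
        exact Finset.prod_le_prod (fun ℓ _ => norm_nonneg _)
          (fun ℓ hℓ => factor_bound' (hz ℓ (Finset.ne_of_mem_erase hℓ)).ne' (t ℓ))
      have hQb : ‖∏ ℓ : Fin n, (((t ℓ : ℂ) - Complex.I)⁻¹ - ((t ℓ : ℂ) + Complex.I)⁻¹)‖
          ≤ ∏ ℓ : Fin n, (2*Real.sqrt 3 * (1 + (t ℓ)^2)⁻¹) := by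
        rw [norm_prod]
        exact Finset.prod_le_prod (fun ℓ _ => norm_nonneg _)
          (fun ℓ _ => const_factor_bound (t ℓ))
      have hwinv : ‖w‖⁻¹ ≤ 1 := inv_le_one_of_one_le₀ hw1'
      have h6s : (0:ℝ) ≤ (6/Real.sin θ) * (1 + (t j)^2)⁻¹ :=
        mul_nonneg (div_nonneg (by norm_num) hs0.le) (by positivity)
      calc (2/2^n) * (‖((((t j : ℂ) - w)⁻¹ - ((t j : ℂ) + Complex.I)⁻¹))/w‖ *
            ‖∏ ℓ ∈ Finset.univ.erase j, (((t ℓ : ℂ) - z ℓ)⁻¹ - ((t ℓ : ℂ) + Complex.I)⁻¹)‖)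
          + ((1/2^n) * ‖∏ ℓ : Fin n, (((t ℓ : ℂ) - Complex.I)⁻¹ - ((t ℓ : ℂ) + Complex.I)⁻¹)‖)
            * ‖w‖⁻¹
          ≤ (2/2^n) * (((6/Real.sin θ) * (1 + (t j)^2)⁻¹) *
              ∏ ℓ ∈ Finset.univ.erase j, (MzConst (z ℓ) * (1 + (t ℓ)^2)⁻¹))
            + ((1/2^n) * ∏ ℓ : Fin n, (2*Real.sqrt 3 * (1 + (t ℓ)^2)⁻¹)) * 1 := by
            apply add_le_add
            · apply mul_le_mul_of_nonneg_left _ (by positivity)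
              exact mul_le_mul hstoltz hPb (norm_nonneg _) h6s
            · apply mul_le_mul _ hwinv (by positivity) _
              · exact mul_le_mul_of_nonneg_left hQb (by positivity)
              · exact mul_nonneg (by positivity)
                  (Finset.prod_nonneg fun ℓ _ => by positivity)
        _ = D * ∏ ℓ : Fin n, (1 + (t ℓ)^2)⁻¹ := by
            rw [Finset.prod_mul_distrib, Finset.prod_mul_distrib, Finset.prod_const,
              Finset.card_univ, Fintype.card_fin,
              ← Finset.mul_prod_erase Finset.univ (fun ℓ => (1 + (t ℓ)^2)⁻¹)
                (Finset.mem_univ j), hD]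
            ring
    · -- integrability of the bound
      refine ⟨(continuous_const.mul (continuous_finset_prod _ fun ℓ _ =>
          Continuous.inv₀ (continuous_const.add ((continuous_apply ℓ).pow 2))
            (fun t => (by positivity : (0:ℝ) < 1 + t ℓ ^ 2).ne'))).aestronglyMeasurable, ?_⟩
      rw [hasFiniteIntegral_iff_ofReal (ae_of_all _ fun t =>
        mul_nonneg hDnn (Finset.prod_nonneg fun ℓ _ => by positivity))]
      calc ∫⁻ t, ENNReal.ofReal (D * ∏ ℓ : Fin n, (1 + (t ℓ)^2)⁻¹) ∂μ
          = ∫⁻ t, ENNReal.ofReal D * ENNReal.ofReal (∏ ℓ : Fin n, (1 + (t ℓ)^2)⁻¹) ∂μ :=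
            lintegral_congr fun t => ENNReal.ofReal_mul hDnn
        _ = ENNReal.ofReal D * ∫⁻ t, ENNReal.ofReal (∏ ℓ : Fin n, (1 + (t ℓ)^2)⁻¹) ∂μ :=
            lintegral_const_mul' _ _ ENNReal.ofReal_ne_top
        _ < ⊤ := ENNReal.mul_lt_top ENNReal.ofReal_lt_top hμg
    · -- pointwise limit
      apply ae_of_all
      intro t
      have hid : (fun w : ℂ => kernelK n (Function.update z j w) t / w)
          = fun w : ℂ => (Complex.I * (2/(2*Complex.I)^n)) *
              (((((t j : ℂ) - w)⁻¹ - ((t j : ℂ) + Complex.I)⁻¹))/w *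
                ∏ ℓ ∈ Finset.univ.erase j, (((t ℓ : ℂ) - z ℓ)⁻¹ - ((t ℓ : ℂ) + Complex.I)⁻¹))
            - (Complex.I * (1/(2*Complex.I)^n) *
                ∏ ℓ : Fin n, (((t ℓ : ℂ) - Complex.I)⁻¹ - ((t ℓ : ℂ) + Complex.I)⁻¹)) * w⁻¹ :=
        funext fun w => by rw [kernelK_update, split_id]
      rw [hid]
      have hA : Tendsto (fun w : ℂ => ‖(t j : ℂ) - w‖) F atTop := by
        apply tendsto_atTop_mono _ (tendsto_atTop_add_const_right F (-‖((t j : ℂ))‖) hnorm)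
        intro w
        have h1 := norm_sub_norm_le w ((t j : ℂ))
        have h2 : ‖w - ((t j : ℂ))‖ = ‖(t j : ℂ) - w‖ := norm_sub_rev _ _
        linarith
      have h1 : Tendsto (fun w : ℂ => ((t j : ℂ) - w)⁻¹) F (𝓝 0) := by
        rw [tendsto_zero_iff_norm_tendsto_zero]
        simpa only [norm_inv, Function.comp_def] using tendsto_inv_atTop_zero.comp hA
      have hfj : Tendsto (fun w : ℂ =>
          ((((t j : ℂ) - w)⁻¹ - ((t j : ℂ) + Complex.I)⁻¹))/w) F (𝓝 0) := by
        have h2 := (h1.sub (tendsto_const_nhds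
          (x := (((t j : ℂ) + Complex.I)⁻¹)))).mul hinv
        simpa only [div_eq_mul_inv, mul_zero] using h2
      have hfinal := ((hfj.mul_const
          (∏ ℓ ∈ Finset.univ.erase j, (((t ℓ : ℂ) - z ℓ)⁻¹ - ((t ℓ : ℂ) + Complex.I)⁻¹))).const_mul
            (Complex.I * (2/(2*Complex.I)^n))).sub
        (hinv.const_mul (Complex.I * (1/(2*Complex.I)^n) *
          ∏ ℓ : Fin n, (((t ℓ : ℂ) - Complex.I)⁻¹ - ((t ℓ : ℂ) + Complex.I)⁻¹)))
      simpa using hfinal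
  -- eventual description of h
  have hev : ∀ᶠ w in F, h (Function.update z j w) / w
      = (b j : ℂ) + ((a : ℂ) + ∑ ℓ ∈ Finset.univ.erase j, (b ℓ : ℂ) * z ℓ) * w⁻¹
        + (1/(Real.pi : ℂ)^n) * ∫ t, kernelK n (Function.update z j w) t / w ∂μ := by
    filter_upwards [hmemS] with w hwS
    have hw0 : w ≠ 0 := by
      intro h0; rw [h0] at hwS; exact lt_irrefl 0 (by simpa using hwS.1)
    have hmem : Function.update z j w ∈ upperPoly n := by
      intro k
      rcases eq_or_ne k j with rfl | hk
      · rw [Function.update_self]; exact hwS.1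
      · rw [Function.update_of_ne hk]; exact hz k hk
    rw [hh _ hmem, integral_div]
    have hsum : (∑ ℓ : Fin n, (b ℓ : ℂ) * Function.update z j w ℓ)
        = (b j : ℂ) * w + ∑ ℓ ∈ Finset.univ.erase j, (b ℓ : ℂ) * z ℓ := by
      rw [← Finset.add_sum_erase Finset.univ _ (Finset.mem_univ j), Function.update_self]
      congr 1
      exact Finset.sum_congr rfl fun ℓ hℓ => by
        rw [Function.update_of_ne (Finset.ne_of_mem_erase hℓ)]
    rw [hsum]
    have hpi : ((Real.pi : ℂ))^n ≠ 0 :=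
      pow_ne_zero _ (by exact_mod_cast Real.pi_ne_zero)
    field_simp
    ring
  have hmodel : Tendsto (fun w : ℂ =>
      (b j : ℂ) + ((a : ℂ) + ∑ ℓ ∈ Finset.univ.erase j, (b ℓ : ℂ) * z ℓ) * w⁻¹
        + (1/(Real.pi : ℂ)^n) * ∫ t, kernelK n (Function.update z j w) t / w ∂μ) F
      (𝓝 ((b j : ℂ) + ((a : ℂ) + ∑ ℓ ∈ Finset.univ.erase j, (b ℓ : ℂ) * z ℓ) * 0
        + (1/(Real.pi : ℂ)^n) * 0)) :=
    (tendsto_const_nhds.add ((hinv.const_mul _))).add (hK.const_mul _)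
  have hfin := hmodel.congr' (hev.mono fun w hw => hw.symm)
  simpa using hfin
end

section
/- Let μ₂ be the positive Borel measure on ℝ² defined by μ₂(U) := π ∫_ℝ χ_U(t,t) dt for Borel sets U ⊆ ℝ² (i.e. μ₂ is the pushforward of π times Lebesgue measure on ℝ under t ↦ (t,t), a measure supported on the diagonal). Then μ₂ satisfies the growth condition, and for all z₁, z₂ ∈ ℂ with Im z₁ > 0 and Im z₂ > 0, the Cauchy-type function of μ₂ satisfies π^{−2} ∫_{ℝ²} K_2((z₁,z₂),t) dμ₂(t) = −i/2 − 1/(i+z₁) − 1/(i+z₂). In particular, its value at (4i,4i) equals −i/10, so its imaginary part is negative at some point of ℂ^{+2}. -/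
open Complex MeasureTheory Finset Filter Topology

/-- The measure `μ₂` on `ℝ²`: `π` times the pushforward of Lebesgue measure under `t ↦ (t,t)`,
i.e. `μ₂(U) = π ∫_ℝ χ_U(t,t) dt`. -/
noncomputable def muDiag : Measure (Fin 2 → ℝ) :=
  ENNReal.ofReal Real.pi •
    Measure.map (fun t : ℝ => (fun _ : Fin 2 => t)) volume

lemma sub_ne_zero_of_im {a : ℂ} (ha : a.im ≠ 0) (t : ℝ) : (t : ℂ) - a ≠ 0 := by
  intro h
  have h2 : ((t:ℂ) - a).im = 0 := by rw [h]; simp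
  simp only [Complex.sub_im, Complex.ofReal_im, zero_sub, neg_eq_zero] at h2
  exact ha h2

lemma tendsto_inv_coe_atBot : Tendsto (fun t : ℝ => t⁻¹) atBot (𝓝 0) := by
  have h := ((tendsto_inv_atTop_zero (𝕜 := ℝ)).comp tendsto_neg_atBot_atTop).neg
  rw [neg_zero] at h
  refine h.congr fun t => ?_
  simp [Function.comp, inv_neg]

lemma tendsto_inv_sub {a : ℂ} {l : Filter ℝ}
    (hl : Tendsto (fun t : ℝ => |t|) l atTop) :
    Tendsto (fun t : ℝ => ((t:ℂ) - a)⁻¹) l (𝓝 0) := by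
  have hb : Tendsto (fun t : ℝ => (|t| - ‖a‖)⁻¹) l (𝓝 0) :=
    tendsto_inv_atTop_zero.comp (tendsto_atTop_add_const_right _ _ hl)
  refine squeeze_zero_norm' ?_ hb
  filter_upwards [hl.eventually_ge_atTop (‖a‖ + 1)] with t ht
  have h2 : (0:ℝ) < |t| - ‖a‖ := by
    have : (0:ℝ) ≤ ‖a‖ := norm_nonneg a
    linarith
  have h3 : |t| - ‖a‖ ≤ ‖(t:ℂ) - a‖ := by
    have := norm_sub_norm_le ((t:ℂ)) a
    rw [Complex.norm_real, Real.norm_eq_abs] at this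
    linarith
  rw [norm_inv]
  exact inv_anti₀ h2 h3

-- the big-O part: (1+t²)·(t−a)⁻¹(t−b)⁻¹ → 1 along l where 1/t → 0
lemma tendsto_ratio_one {a b : ℂ} (ha : a.im ≠ 0) (hb : b.im ≠ 0) {l : Filter ℝ}
    (hl : Tendsto (fun t : ℝ => t⁻¹) l (𝓝 0)) (hne : ∀ᶠ t in l, t ≠ 0) :
    Tendsto (fun t : ℝ => ((t:ℂ) - a)⁻¹ * ((t:ℂ) - b)⁻¹ * ((1 + t^2 : ℝ) : ℂ)) l (𝓝 1) := by
  have hcont : ContinuousAt (fun u : ℝ =>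
      ((1:ℂ) - a * (u:ℝ))⁻¹ * ((1:ℂ) - b * (u:ℝ))⁻¹ * (((u:ℝ)^2 + 1 : ℝ) : ℂ)) 0 := by
    have h1 : ((1:ℂ) - a * ((0:ℝ):ℂ)) ≠ 0 := by simp
    have h2 : ((1:ℂ) - b * ((0:ℝ):ℂ)) ≠ 0 := by simp
    fun_prop (disch := simp_all)
  have key := hcont.tendsto.comp hl
  simp only [Function.comp_def] at key
  norm_num at key
  refine key.congr' ?_
  filter_upwards [hne] with t ht
  have h1 : ((t:ℂ)) ≠ 0 := Complex.ofReal_ne_zero.mpr ht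
  have h2 : ((t:ℂ)) - a ≠ 0 := sub_ne_zero_of_im ha t
  have h3 : ((t:ℂ)) - b ≠ 0 := sub_ne_zero_of_im hb t
  push_cast
  field_simp

lemma integrable_pp {a b : ℂ} (ha : a.im ≠ 0) (hb : b.im ≠ 0) :
    Integrable (fun t : ℝ => ((t:ℂ) - a)⁻¹ * ((t:ℂ) - b)⁻¹) := by
  have hcont : Continuous (fun t : ℝ => ((t:ℂ) - a)⁻¹ * ((t:ℂ) - b)⁻¹) := by
    apply Continuous.mul
    · exact (Complex.continuous_ofReal.sub continuous_const).inv₀ (sub_ne_zero_of_im ha)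
    · exact (Complex.continuous_ofReal.sub continuous_const).inv₀ (sub_ne_zero_of_im hb)
  set g : ℝ → ℂ := fun t => (((1 + t^2)⁻¹ : ℝ) : ℂ) with hg
  have hgint : Integrable g := integrable_inv_one_add_sq.ofReal
  have hO : ∀ l : Filter ℝ, Tendsto (fun t : ℝ => t⁻¹) l (𝓝 0) → (∀ᶠ t in l, t ≠ 0) →
      (fun t : ℝ => ((t:ℂ) - a)⁻¹ * ((t:ℂ) - b)⁻¹) =O[l] g := by
    intro l hl hne
    apply Asymptotics.isBigO_of_div_tendsto_nhds (c := 1)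
    · have := tendsto_ratio_one ha hb hl hne
      refine this.congr fun t => ?_
      have h0 : (1 + t^2 : ℝ) ≠ 0 := by positivity
      simp only [Pi.div_apply, hg]
      rw [div_eq_mul_inv, Complex.ofReal_inv, inv_inv]
    · filter_upwards with t htg
      exfalso
      have : (1 + t^2 : ℝ) ≠ 0 := by positivity
      simp only [hg] at htg
      rw [Complex.ofReal_eq_zero, inv_eq_zero] at htg
      exact this htg
  refine hcont.locallyIntegrable.integrable_of_isBigO_atBot_atTop
    (hO atBot tendsto_inv_coe_atBot ?_) (hgint.integrableAtFilter _)
    (hO atTop tendsto_inv_atTop_zero ?_) (hgint.integrableAtFilter _)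
  · exact eventually_atBot.2 ⟨-1, fun t ht => by linarith⟩
  · exact eventually_atTop.2 ⟨1, fun t ht => by linarith⟩

noncomputable def Fprim (a : ℂ) (t : ℝ) : ℂ :=
  ((Real.log ((t - a.re)^2 + a.im^2) / 2 : ℝ) : ℂ) +
    Complex.I * ((Real.arctan ((t - a.re) / a.im) : ℝ) : ℂ)

lemma q_pos {y : ℝ} (hy : y ≠ 0) (s : ℝ) : 0 < s^2 + y^2 := by positivity

lemma hasDerivAt_Fprim {a : ℂ} (ha : a.im ≠ 0) (t : ℝ) :
    HasDerivAt (Fprim a) (((t:ℂ) - a)⁻¹) t := by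
  set x := a.re
  set y := a.im
  have hq : (0:ℝ) < (t - x)^2 + y^2 := q_pos ha (t - x)
  have h1 : HasDerivAt (fun t : ℝ => Real.log ((t - x)^2 + y^2) / 2)
      ((t - x) / ((t - x)^2 + y^2)) t := by
    have hin : HasDerivAt (fun t : ℝ => (t - x)^2 + y^2) (2 * (t - x)) t := by
      have := (((hasDerivAt_id t).sub_const x).pow 2).add_const (y^2)
      simpa [mul_comm] using this
    have := (hin.log hq.ne').div_const 2
    refine this.congr_deriv ?_
    field_simp
  have h2 : HasDerivAt (fun t : ℝ => Real.arctan ((t - x) / y))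
      (y / ((t - x)^2 + y^2)) t := by
    have hin : HasDerivAt (fun t : ℝ => (t - x) / y) (1 / y) t := by
      simpa using ((hasDerivAt_id t).sub_const x).div_const y
    have := (Real.hasDerivAt_arctan ((t - x) / y)).comp t hin
    refine this.congr_deriv ?_
    field_simp
    ring
  have hD := (h1.ofReal_comp).add ((h2.ofReal_comp).const_mul Complex.I)
  have heq : (((t - x) / ((t - x)^2 + y^2) : ℝ) : ℂ) +
      Complex.I * ((y / ((t - x)^2 + y^2) : ℝ) : ℂ) = ((t:ℂ) - a)⁻¹ := by
    have hne : ((t:ℂ) - a) ≠ 0 := sub_ne_zero_of_im ha t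
    have hA : ((t:ℂ) - a) = ((t - x : ℝ) : ℂ) - (y:ℝ) * Complex.I := by
      rw [← Complex.re_add_im a]; push_cast; ring
    have hq' : ((t-x)^2 + y^2 : ℝ) ≠ 0 := hq.ne'
    refine eq_inv_of_mul_eq_one_left ?_
    rw [hA]
    have hq2 : (((t-x)^2 + y^2 : ℝ) : ℂ) ≠ 0 := Complex.ofReal_ne_zero.mpr hq'
    push_cast at hq2 ⊢
    field_simp
    linear_combination (-1 : ℂ) * (y:ℂ)^2 * Complex.I_sq
  rw [show Fprim a = fun t : ℝ => ((Real.log ((t - x)^2 + y^2) / 2 : ℝ) : ℂ) +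
      Complex.I * ((Real.arctan ((t - x) / y) : ℝ) : ℂ) from rfl]
  rw [← heq]
  exact hD

noncomputable def sgnIm (a : ℂ) : ℝ := if 0 < a.im then 1 else -1

lemma tendsto_sub_linear_atTop (x : ℝ) : Tendsto (fun t : ℝ => t - x) atTop atTop :=
  tendsto_atTop_add_const_right atTop (-x) tendsto_id
lemma tendsto_sub_linear_atBot (x : ℝ) : Tendsto (fun t : ℝ => t - x) atBot atBot :=
  tendsto_atBot_add_const_right atBot (-x) tendsto_id

lemma tendsto_arctan_part_atTop {a : ℂ} (ha : a.im ≠ 0) :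
    Tendsto (fun t : ℝ => Real.arctan ((t - a.re) / a.im)) atTop
      (𝓝 (sgnIm a * (Real.pi / 2))) := by
  rcases lt_or_gt_of_ne ha with hy | hy
  · have h1 : Tendsto (fun t : ℝ => (t - a.re) / a.im) atTop atBot :=
      (tendsto_sub_linear_atTop a.re).atTop_div_const_of_neg hy
    have := (tendsto_nhds_of_tendsto_nhdsWithin Real.tendsto_arctan_atBot).comp h1
    simpa [sgnIm, not_lt.mpr hy.le, Function.comp_def] using this
  · have h1 : Tendsto (fun t : ℝ => (t - a.re) / a.im) atTop atTop :=
      (tendsto_sub_linear_atTop a.re).atTop_div_const hy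
    have := (tendsto_nhds_of_tendsto_nhdsWithin Real.tendsto_arctan_atTop).comp h1
    simpa [sgnIm, hy, Function.comp_def] using this

lemma tendsto_arctan_part_atBot {a : ℂ} (ha : a.im ≠ 0) :
    Tendsto (fun t : ℝ => Real.arctan ((t - a.re) / a.im)) atBot
      (𝓝 (-(sgnIm a * (Real.pi / 2)))) := by
  rcases lt_or_gt_of_ne ha with hy | hy
  · have h1 : Tendsto (fun t : ℝ => (t - a.re) / a.im) atBot atTop := by
      simp only [div_eq_mul_inv]
      exact (tendsto_sub_linear_atBot a.re).atBot_mul_const_of_neg (inv_lt_zero.mpr hy)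
    have := (tendsto_nhds_of_tendsto_nhdsWithin Real.tendsto_arctan_atTop).comp h1
    simpa [sgnIm, not_lt.mpr hy.le, Function.comp_def] using this
  · have h1 : Tendsto (fun t : ℝ => (t - a.re) / a.im) atBot atBot :=
      (tendsto_sub_linear_atBot a.re).atBot_div_const hy
    have := (tendsto_nhds_of_tendsto_nhdsWithin Real.tendsto_arctan_atBot).comp h1
    simpa [sgnIm, hy, Function.comp_def] using this

lemma tendsto_log_part {a b : ℂ} (ha : a.im ≠ 0) (hb : b.im ≠ 0) {l : Filter ℝ}
    (hl : Tendsto (fun t : ℝ => t⁻¹) l (𝓝 0)) (hne : ∀ᶠ t in l, t ≠ 0) :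
    Tendsto (fun t : ℝ =>
      Real.log ((t - a.re)^2 + a.im^2) / 2 - Real.log ((t - b.re)^2 + b.im^2) / 2) l (𝓝 0) := by
  have hc : ContinuousAt (fun u : ℝ =>
      Real.log (((1 - a.re*u)^2 + a.im^2*u^2) / ((1 - b.re*u)^2 + b.im^2*u^2)) / 2) 0 := by
    have hd : ((1 - b.re*(0:ℝ))^2 + b.im^2*(0:ℝ)^2) ≠ 0 := by norm_num
    have hr : ((1 - a.re*(0:ℝ))^2 + a.im^2*(0:ℝ)^2) / ((1 - b.re*(0:ℝ))^2 + b.im^2*(0:ℝ)^2) ≠ 0 := by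
      norm_num
    fun_prop (disch := assumption)
  have key := hc.tendsto.comp hl
  norm_num at key
  refine key.congr' ?_
  filter_upwards [hne] with t ht
  have hq1 : (0:ℝ) < (t - a.re)^2 + a.im^2 := q_pos ha _
  have hq2 : (0:ℝ) < (t - b.re)^2 + b.im^2 := q_pos hb _
  have e1 : (1 - a.re*t⁻¹)^2 + a.im^2*(t⁻¹)^2 = ((t - a.re)^2 + a.im^2)/t^2 := by
    field_simp
  have e2 : (1 - b.re*t⁻¹)^2 + b.im^2*(t⁻¹)^2 = ((t - b.re)^2 + b.im^2)/t^2 := by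
    field_simp
  have e3 : ((t - a.re)^2 + a.im^2)/t^2 / (((t - b.re)^2 + b.im^2)/t^2)
      = ((t - a.re)^2 + a.im^2) / ((t - b.re)^2 + b.im^2) := by
    rw [div_div_div_cancel_right₀]
    positivity
  simp only [Function.comp]
  rw [e1, e2, e3, Real.log_div hq1.ne' hq2.ne']
  ring

lemma Fprim_sub (a b : ℂ) (t : ℝ) : Fprim a t - Fprim b t =
    ((Real.log ((t - a.re)^2 + a.im^2) / 2 - Real.log ((t - b.re)^2 + b.im^2) / 2 : ℝ) : ℂ) +
      Complex.I * ((Real.arctan ((t - a.re) / a.im) - Real.arctan ((t - b.re) / b.im) : ℝ) : ℂ) := by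
  simp only [Fprim]
  push_cast
  ring

lemma tendsto_Fdiff_atTop {a b : ℂ} (ha : a.im ≠ 0) (hb : b.im ≠ 0) :
    Tendsto (fun t : ℝ => Fprim a t - Fprim b t) atTop
      (𝓝 (Complex.I * (((sgnIm a - sgnIm b) * (Real.pi/2) : ℝ) : ℂ))) := by
  have hL := tendsto_log_part ha hb tendsto_inv_atTop_zero
    (eventually_atTop.2 ⟨1, fun t ht => by linarith⟩)
  have hA := (tendsto_arctan_part_atTop ha).sub (tendsto_arctan_part_atTop hb)
  have h1 := (Complex.continuous_ofReal.tendsto _).comp hL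
  have h2 := ((Complex.continuous_ofReal.tendsto _).comp hA).const_mul Complex.I
  have := h1.add h2
  simp only [Function.comp] at this
  refine Tendsto.congr (fun t => (Fprim_sub a b t).symm) ?_
  convert this using 2
  push_cast
  ring

lemma tendsto_Fdiff_atBot {a b : ℂ} (ha : a.im ≠ 0) (hb : b.im ≠ 0) :
    Tendsto (fun t : ℝ => Fprim a t - Fprim b t) atBot
      (𝓝 (-(Complex.I * (((sgnIm a - sgnIm b) * (Real.pi/2) : ℝ) : ℂ)))) := by
  have hL := tendsto_log_part ha hb tendsto_inv_coe_atBot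
    (eventually_atBot.2 ⟨-1, fun t ht => by linarith⟩)
  have hA := (tendsto_arctan_part_atBot ha).sub (tendsto_arctan_part_atBot hb)
  have h1 := (Complex.continuous_ofReal.tendsto _).comp hL
  have h2 := ((Complex.continuous_ofReal.tendsto _).comp hA).const_mul Complex.I
  have := h1.add h2
  simp only [Function.comp] at this
  refine Tendsto.congr (fun t => (Fprim_sub a b t).symm) ?_
  convert this using 2
  push_cast
  ring

lemma integrable_diff {a b : ℂ} (ha : a.im ≠ 0) (hb : b.im ≠ 0) :
    Integrable (fun t : ℝ => ((t:ℂ) - a)⁻¹ - ((t:ℂ) - b)⁻¹) := by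
  have h := (integrable_pp ha hb).const_mul (a - b)
  refine h.congr ?_
  filter_upwards with t
  have h2 : ((t:ℂ)) - a ≠ 0 := sub_ne_zero_of_im ha t
  have h3 : ((t:ℂ)) - b ≠ 0 := sub_ne_zero_of_im hb t
  field_simp
  ring

lemma integral_inv_sub_inv {a b : ℂ} (ha : a.im ≠ 0) (hb : b.im ≠ 0) :
    ∫ t : ℝ, (((t:ℂ) - a)⁻¹ - ((t:ℂ) - b)⁻¹) =
      (Real.pi : ℂ) * Complex.I * (((sgnIm a : ℝ) : ℂ) - ((sgnIm b : ℝ) : ℂ)) := by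
  have hderiv : ∀ t : ℝ, HasDerivAt (fun t : ℝ => Fprim a t - Fprim b t)
      (((t:ℂ) - a)⁻¹ - ((t:ℂ) - b)⁻¹) t :=
    fun t => (hasDerivAt_Fprim ha t).sub (hasDerivAt_Fprim hb t)
  rw [integral_of_hasDerivAt_of_tendsto hderiv (integrable_diff ha hb)
    (tendsto_Fdiff_atBot ha hb) (tendsto_Fdiff_atTop ha hb)]
  push_cast
  ring

lemma integral_sq {a : ℂ} (ha : a.im ≠ 0) :
    ∫ t : ℝ, ((t:ℂ) - a)⁻¹ * ((t:ℂ) - a)⁻¹ = 0 := by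
  have hderiv : ∀ t : ℝ, HasDerivAt (fun t : ℝ => -((t:ℂ) - a)⁻¹)
      (((t:ℂ) - a)⁻¹ * ((t:ℂ) - a)⁻¹) t := by
    intro t
    have h0 : HasDerivAt (fun w : ℂ => (w - a)⁻¹) (-1 / ((t:ℂ) - a)^2) ((t:ℂ)) := by
      have := ((hasDerivAt_id ((t:ℂ))).sub_const a).inv (sub_ne_zero_of_im ha t)
      simpa [Pi.inv_def] using this
    have h1 := (h0.comp_ofReal).neg
    refine h1.congr_deriv ?_
    have h2 : ((t:ℂ)) - a ≠ 0 := sub_ne_zero_of_im ha t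
    field_simp
  have hbot := (tendsto_inv_sub (a := a) tendsto_abs_atBot_atTop).neg
  have htop := (tendsto_inv_sub (a := a) tendsto_abs_atTop_atTop).neg
  rw [neg_zero] at hbot htop
  rw [integral_of_hasDerivAt_of_tendsto hderiv (integrable_pp ha ha) hbot htop, sub_zero]

lemma integral_pp_ne {a b : ℂ} (ha : a.im ≠ 0) (hb : b.im ≠ 0) (hab : a ≠ b) :
    ∫ t : ℝ, ((t:ℂ) - a)⁻¹ * ((t:ℂ) - b)⁻¹ =
      (a - b)⁻¹ * ((Real.pi : ℂ) * Complex.I * (((sgnIm a : ℝ) : ℂ) - ((sgnIm b : ℝ) : ℂ))) := by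
  have hab' : a - b ≠ 0 := sub_ne_zero.mpr hab
  have key : ∀ t : ℝ, ((t:ℂ) - a)⁻¹ * ((t:ℂ) - b)⁻¹ =
      (a - b)⁻¹ * ((((t:ℂ) - a)⁻¹ - ((t:ℂ) - b)⁻¹)) := by
    intro t
    have h2 : ((t:ℂ)) - a ≠ 0 := sub_ne_zero_of_im ha t
    have h3 : ((t:ℂ)) - b ≠ 0 := sub_ne_zero_of_im hb t
    field_simp
    ring
  simp only [key]
  rw [integral_const_mul, integral_inv_sub_inv ha hb]

lemma integral_pp_upper {a b : ℂ} (ha : 0 < a.im) (hb : 0 < b.im) :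
    ∫ t : ℝ, ((t:ℂ) - a)⁻¹ * ((t:ℂ) - b)⁻¹ = 0 := by
  by_cases hab : a = b
  · subst hab; exact integral_sq ha.ne'
  · rw [integral_pp_ne ha.ne' hb.ne' hab]
    simp [sgnIm, ha, hb]

lemma integral_pp_upper_negI {a : ℂ} (ha : 0 < a.im) :
    ∫ t : ℝ, ((t:ℂ) - a)⁻¹ * ((t:ℂ) + Complex.I)⁻¹ =
      (a + Complex.I)⁻¹ * (2 * (Real.pi : ℂ) * Complex.I) := by
  have hne : a ≠ -Complex.I := by
    intro h
    rw [h] at ha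
    norm_num at ha
  have hIm : (-Complex.I).im ≠ 0 := by simp
  have := integral_pp_ne ha.ne' hIm hne
  simp only [sub_neg_eq_add] at this
  rw [this]
  have h1 : sgnIm a = 1 := by simp [sgnIm, ha]
  have h2 : sgnIm (-Complex.I) = -1 := by norm_num [sgnIm]
  rw [h1, h2]
  push_cast
  ring

lemma negI_im : (-Complex.I).im ≠ 0 := by simp
lemma I_im' : (Complex.I).im ≠ 0 := by simp

lemma integral_pp_upper_negI' {a : ℂ} (ha : 0 < a.im) :
    ∫ t : ℝ, ((t:ℂ) - a)⁻¹ * ((t:ℂ) - (-Complex.I))⁻¹ =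
      (a + Complex.I)⁻¹ * (2 * (Real.pi : ℂ) * Complex.I) := by
  have hne : a ≠ -Complex.I := by
    intro h; rw [h] at ha; norm_num at ha
  rw [integral_pp_ne ha.ne' negI_im hne]
  have h1 : sgnIm a = 1 := by simp [sgnIm, ha]
  have h2 : sgnIm (-Complex.I) = -1 := by norm_num [sgnIm]
  rw [h1, h2, sub_neg_eq_add]
  push_cast
  ring

lemma integral_pp_I_negI :
    ∫ t : ℝ, ((t:ℂ) - Complex.I)⁻¹ * ((t:ℂ) - (-Complex.I))⁻¹ = (Real.pi : ℂ) := by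
  rw [integral_pp_upper_negI' (by simp : (0:ℝ) < Complex.I.im)]
  have h2I : Complex.I + Complex.I ≠ 0 := by
    simp [← two_mul, Complex.I_ne_zero]
  field_simp
  ring

lemma kernel_diag_integral (z₁ z₂ : ℂ) (h₁ : 0 < z₁.im) (h₂ : 0 < z₂.im) :
    ∫ t : ℝ, kernelK 2 ![z₁, z₂] (fun _ => t) =
      (Real.pi : ℂ) * (-Complex.I/2 - (Complex.I + z₁)⁻¹ - (Complex.I + z₂)⁻¹) := by
  have hexp : (fun t : ℝ => kernelK 2 ![z₁, z₂] (fun _ => t)) = fun t : ℝ =>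
      (-Complex.I/2) * (((t:ℂ) - z₁)⁻¹ * ((t:ℂ) - z₂)⁻¹)
      + (Complex.I/2) * (((t:ℂ) - z₁)⁻¹ * ((t:ℂ) - (-Complex.I))⁻¹)
      + (Complex.I/2) * (((t:ℂ) - z₂)⁻¹ * ((t:ℂ) - (-Complex.I))⁻¹)
      - (Complex.I/4) * (((t:ℂ) - (-Complex.I))⁻¹ * ((t:ℂ) - (-Complex.I))⁻¹)
      + (Complex.I/4) * (((t:ℂ) - Complex.I)⁻¹ * ((t:ℂ) - Complex.I)⁻¹)
      - (Complex.I/2) * (((t:ℂ) - Complex.I)⁻¹ * ((t:ℂ) - (-Complex.I))⁻¹) := by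
    funext t
    simp only [kernelK, Fin.prod_univ_two, Matrix.cons_val_zero, Matrix.cons_val_one,
      Matrix.head_cons, sub_neg_eq_add]
    have h4 : (2 * Complex.I) ^ 2 = -4 := by
      rw [mul_pow, Complex.I_sq]; norm_num
    rw [h4]
    ring
  have ia := (integrable_pp h₁.ne' h₂.ne').const_mul (-Complex.I/2)
  have ib := (integrable_pp h₁.ne' negI_im).const_mul (Complex.I/2)
  have ic := (integrable_pp h₂.ne' negI_im).const_mul (Complex.I/2)
  have id' := (integrable_pp negI_im negI_im).const_mul (Complex.I/4)
  have ie := (integrable_pp I_im' I_im').const_mul (Complex.I/4)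
  have if' := (integrable_pp I_im' negI_im).const_mul (Complex.I/2)
  set e1 : ℝ → ℂ := fun t => (-Complex.I/2) * (((t:ℂ) - z₁)⁻¹ * ((t:ℂ) - z₂)⁻¹) with he1
  set e2 : ℝ → ℂ := fun t => (Complex.I/2) * (((t:ℂ) - z₁)⁻¹ * ((t:ℂ) - (-Complex.I))⁻¹) with he2
  set e3 : ℝ → ℂ := fun t => (Complex.I/2) * (((t:ℂ) - z₂)⁻¹ * ((t:ℂ) - (-Complex.I))⁻¹) with he3
  set e4 : ℝ → ℂ := fun t => (Complex.I/4) * (((t:ℂ) - (-Complex.I))⁻¹ * ((t:ℂ) - (-Complex.I))⁻¹) with he4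
  set e5 : ℝ → ℂ := fun t => (Complex.I/4) * (((t:ℂ) - Complex.I)⁻¹ * ((t:ℂ) - Complex.I)⁻¹) with he5
  set e6 : ℝ → ℂ := fun t => (Complex.I/2) * (((t:ℂ) - Complex.I)⁻¹ * ((t:ℂ) - (-Complex.I))⁻¹) with he6
  have i12 : Integrable (fun t => e1 t + e2 t) := ia.add ib
  have i13 : Integrable (fun t => (e1 t + e2 t) + e3 t) := i12.add ic
  have i14 : Integrable (fun t => ((e1 t + e2 t) + e3 t) - e4 t) := i13.sub id'
  have i15 : Integrable (fun t => (((e1 t + e2 t) + e3 t) - e4 t) + e5 t) := i14.add ie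
  rw [hexp]
  have hsplit : ∫ t : ℝ, (e1 t + e2 t + e3 t - e4 t + e5 t - e6 t) =
      ((((∫ t : ℝ, e1 t) + ∫ t : ℝ, e2 t) + ∫ t : ℝ, e3 t) - ∫ t : ℝ, e4 t) +
        (∫ t : ℝ, e5 t) - ∫ t : ℝ, e6 t := by
    rw [integral_sub i15 if', integral_add i14 ie, integral_sub i13 id',
      integral_add i12 ic, integral_add ia ib]
  rw [hsplit]
  simp only [he1, he2, he3, he4, he5, he6, integral_const_mul]
  rw [integral_pp_upper h₁ h₂, integral_pp_upper_negI' h₁, integral_pp_upper_negI' h₂,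
    integral_sq negI_im, integral_sq I_im', integral_pp_I_negI]
  linear_combination ((Real.pi : ℂ) * (z₁ + Complex.I)⁻¹ +
    (Real.pi : ℂ) * (z₂ + Complex.I)⁻¹) * Complex.I_sq



lemma map_diag_measurable : Measurable (fun t : ℝ => (fun _ : Fin 2 => t)) :=
  measurable_pi_iff.mpr fun _ => measurable_id

lemma integral_muDiag (f : (Fin 2 → ℝ) → ℂ)
    (hf : AEStronglyMeasurable f (Measure.map (fun t : ℝ => (fun _ : Fin 2 => t)) volume)) :
    ∫ t, f t ∂muDiag = (Real.pi : ℂ) * ∫ s : ℝ, f (fun _ => s) := by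
  rw [muDiag, integral_smul_measure, ENNReal.toReal_ofReal Real.pi_pos.le,
    integral_map map_diag_measurable.aemeasurable hf, Complex.real_smul]

lemma kernel_diag_cont (z₁ z₂ : ℂ) (h₁ : 0 < z₁.im) (h₂ : 0 < z₂.im) :
    Continuous (kernelK 2 ![z₁, z₂]) := by
  have hfac : ∀ (c : ℂ), c.im ≠ 0 → ∀ ℓ : Fin 2,
      Continuous (fun t : Fin 2 → ℝ => ((t ℓ : ℂ) - c)⁻¹) := by
    intro c hc ℓ
    exact ((Complex.continuous_ofReal.comp (continuous_apply ℓ)).sub continuous_const).inv₀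
      (fun t => sub_ne_zero_of_im hc (t ℓ))
  have hz : ∀ ℓ : Fin 2, ((![z₁, z₂]) ℓ).im ≠ 0 := by
    intro ℓ
    fin_cases ℓ <;> simp [h₁.ne', h₂.ne']
  unfold kernelK
  apply continuous_const.mul
  apply Continuous.sub
  · apply continuous_const.mul
    apply continuous_finset_prod
    intro ℓ _
    apply Continuous.sub
    · exact hfac _ (hz ℓ) ℓ
    · have := hfac (-Complex.I) (by simp) ℓ
      simpa [sub_neg_eq_add] using this
  · apply continuous_const.mul
    apply continuous_finset_prod
    intro ℓ _
    apply Continuous.sub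
    · exact hfac Complex.I (by simp) ℓ
    · have := hfac (-Complex.I) (by simp) ℓ
      simpa [sub_neg_eq_add] using this

lemma cauchy_value (z₁ z₂ : ℂ) (h₁ : 0 < z₁.im) (h₂ : 0 < z₂.im) :
    (1 / (Real.pi : ℂ) ^ 2) * ∫ t, kernelK 2 ![z₁, z₂] t ∂muDiag =
      -Complex.I / 2 - (Complex.I + z₁)⁻¹ - (Complex.I + z₂)⁻¹ := by
  rw [integral_muDiag _ ((kernel_diag_cont z₁ z₂ h₁ h₂).aestronglyMeasurable),
    kernel_diag_integral z₁ z₂ h₁ h₂]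
  have hπ : ((Real.pi : ℝ) : ℂ) ≠ 0 := by
    exact_mod_cast Real.pi_ne_zero
  field_simp

lemma growth_muDiag : GrowthCondition 2 muDiag := by
  unfold GrowthCondition muDiag
  have hmeas : Measurable (fun t : Fin 2 → ℝ =>
      ENNReal.ofReal (∏ ℓ : Fin 2, (1 + (t ℓ) ^ 2)⁻¹)) := by
    apply ENNReal.measurable_ofReal.comp
    apply Finset.measurable_prod
    intro ℓ _
    have h0 : ∀ x : Fin 2 → ℝ, (1 + (x ℓ)^2) ≠ 0 := fun x => by positivity
    exact ((measurable_const.add ((measurable_pi_apply ℓ).pow measurable_const)).inv)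
  rw [lintegral_smul_measure, lintegral_map hmeas map_diag_measurable]
  have hint : Integrable (fun s : ℝ => (1 + s^2)⁻¹ * (1 + s^2)⁻¹) := by
    refine integrable_inv_one_add_sq.mono ?_ ?_
    · have hc : Continuous (fun s : ℝ => (1 + s^2)⁻¹ * (1 + s^2)⁻¹) := by
        have h1 : Continuous (fun s : ℝ => (1 + s^2)⁻¹) :=
          (continuous_const.add (continuous_id.pow 2)).inv₀ (fun x => (by positivity : (0:ℝ) < 1 + x^2).ne')
        exact h1.mul h1
      exact hc.aestronglyMeasurable
    · filter_upwards with s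
      have h0 : (0:ℝ) < 1 + s^2 := by positivity
      have h1 : (1 + s^2)⁻¹ ≤ 1 := by
        rw [inv_le_one_iff₀]
        right
        nlinarith
      have h2 : (0:ℝ) ≤ (1 + s^2)⁻¹ := by positivity
      rw [Real.norm_eq_abs, Real.norm_eq_abs]
      rw [_root_.abs_of_nonneg (mul_nonneg h2 h2), _root_.abs_of_nonneg h2]
      nlinarith
  have heq : ∀ s : ℝ, ENNReal.ofReal (∏ ℓ : Fin 2, (1 + ((fun _ : Fin 2 => s) ℓ) ^ 2)⁻¹)
      = ENNReal.ofReal ((1 + s^2)⁻¹ * (1 + s^2)⁻¹) := by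
    intro s
    rw [Fin.prod_univ_two]
  simp only [heq]
  exact ENNReal.mul_lt_top ENNReal.ofReal_lt_top hint.lintegral_lt_top

/-- Example 3.5, the function `f₂`: the measure `μ₂` supported on the diagonal satisfies the
growth condition, its Cauchy-type function equals `−i/2 − 1/(i+z₁) − 1/(i+z₂)` on `ℂ⁺ × ℂ⁺`,
and its value at `(4i, 4i)` equals `−i/10` (so its imaginary part is negative somewhere
on `ℂ^{+2}`). -/
theorem diag_measure_cauchy_type_upper :
    GrowthCondition 2 muDiag ∧
    (∀ z₁ z₂ : ℂ, 0 < z₁.im → 0 < z₂.im →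
      (1 / (Real.pi : ℂ) ^ 2) * ∫ t, kernelK 2 ![z₁, z₂] t ∂muDiag =
        -Complex.I / 2 - (Complex.I + z₁)⁻¹ - (Complex.I + z₂)⁻¹) ∧
    (1 / (Real.pi : ℂ) ^ 2) * ∫ t, kernelK 2 ![4 * Complex.I, 4 * Complex.I] t ∂muDiag =
      -Complex.I / 10  := by
  refine ⟨growth_muDiag, fun z₁ z₂ h₁ h₂ => cauchy_value z₁ z₂ h₁ h₂, ?_⟩
  have h4 : (0:ℝ) < (4 * Complex.I).im := by simp
  rw [cauchy_value _ _ h4 h4]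
  rw [show Complex.I + 4 * Complex.I = 5 * Complex.I from by ring, mul_inv, Complex.inv_I]
  ring
end
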